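/- Let f be the decision rule of a soft regression forest with T trees on ℝ^{d_x}, let W_max be an upper bound on the Euclidean norms ‖w_{i,t}‖ of all internal-node weight vectors, let Π_max be an upper bound on the Euclidean norms ‖π_{l,t}‖ of all leaf decision vectors, and let D_max ≥ 1 be such that every root-to-leaf path in every tree contains at most D_max − 1 internal nodes. Then f is Lipschitz continuous with constant L = W_max · Π_max · (D_max − 1); that is, ‖f(x₁) − f(x₂)‖ ≤ W_max Π_max (D_max − 1) · ‖x₁ − x₂‖ for all x₁, x₂ ∈ ℝ^{d_x}. -/

import Mathlib

open scoped BigOperators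
open scoped NNReal

/-- The sigmoid function `S(z) = 1/(1+e^{-z})`. -/
noncomputable def sigmoid (z : ℝ) : ℝ := 1 / (1 + Real.exp (-z))

/-- Route probability of the leaf indexed by `l : Fin D → Bool` in a full binary soft
regression tree of depth `D` on `ℝ^{d_x}`.  Internal nodes are indexed by the boolean
prefix (of length `< D`) describing the root-to-node path; `l k = true` means the path
to leaf `l` goes left at level `k` (factor `S(wᵀx + b)`), `l k = false` means it goes
right (factor `1 - S(wᵀx + b)`). -/
noncomputable def routeProb (dx D : ℕ)
    (w : List Bool → EuclideanSpace ℝ (Fin dx)) (b : List Bool → ℝ)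
    (l : Fin D → Bool) (x : EuclideanSpace ℝ (Fin dx)) : ℝ :=
  ∏ k : Fin D,
    if l k then
      sigmoid ((inner ℝ (w ((List.ofFn l).take (k : ℕ))) x : ℝ) + b ((List.ofFn l).take (k : ℕ)))
    else
      1 - sigmoid ((inner ℝ (w ((List.ofFn l).take (k : ℕ))) x : ℝ) + b ((List.ofFn l).take (k : ℕ)))

lemma routeProb_succ (dx D : ℕ) (w : List Bool → EuclideanSpace ℝ (Fin dx))
    (b : List Bool → ℝ) (h : Bool) (t : Fin D → Bool) (x : EuclideanSpace ℝ (Fin dx)) :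
    routeProb dx (D+1) w b (Fin.cons h t) x =
      (if h then sigmoid ((inner ℝ (w []) x : ℝ) + b [])
        else 1 - sigmoid ((inner ℝ (w []) x : ℝ) + b [])) *
      routeProb dx D (fun pre => w (h :: pre)) (fun pre => b (h :: pre)) t x := by
  unfold routeProb
  rw [Fin.prod_univ_succ]
  have h0 : (List.ofFn (Fin.cons h t : Fin (D+1) → Bool)).take ((0 : Fin (D+1)) : ℕ) = [] := by
    simp
  rw [h0]
  simp only [Fin.cons_zero]
  congr 1
  apply Finset.prod_congr rfl
  intro k _
  have hofn : List.ofFn (Fin.cons h t : Fin (D+1) → Bool) = h :: List.ofFn t := by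
    rw [List.ofFn_succ]; simp
  have htake : (List.ofFn (Fin.cons h t : Fin (D+1) → Bool)).take ((k.succ : Fin (D+1)) : ℕ)
      = h :: (List.ofFn t).take (k : ℕ) := by
    rw [hofn]; simp
  rw [htake]
  simp [Fin.cons_succ]

lemma sigmoid_pos (z : ℝ) : 0 < sigmoid z := by
  unfold sigmoid; positivity

lemma sigmoid_lt_one (z : ℝ) : sigmoid z < 1 := by
  unfold sigmoid
  rw [div_lt_one (by positivity)]
  have := Real.exp_pos (-z); linarith

lemma routeProb_nonneg (dx D : ℕ) (w : List Bool → EuclideanSpace ℝ (Fin dx))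
    (b : List Bool → ℝ) (l : Fin D → Bool) (x : EuclideanSpace ℝ (Fin dx)) :
    0 ≤ routeProb dx D w b l x := by
  apply Finset.prod_nonneg
  intro k _
  split
  · exact (sigmoid_pos _).le
  · have := sigmoid_lt_one ((inner ℝ (w ((List.ofFn l).take (k : ℕ))) x : ℝ) + b ((List.ofFn l).take (k : ℕ)))
    linarith

lemma sum_pi_bool_succ {D : ℕ} (f : (Fin (D+1) → Bool) → ℝ) :
    ∑ l : Fin (D+1) → Bool, f l
      = (∑ t : Fin D → Bool, f (Fin.cons true t)) + ∑ t : Fin D → Bool, f (Fin.cons false t) := by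
  rw [← (Fin.consEquiv (fun _ : Fin (D+1) => Bool)).sum_comp f]
  rw [Fintype.sum_prod_type]
  rw [Fintype.sum_bool]
  rfl

lemma routeProb_sum_one (dx : ℕ) : ∀ (D : ℕ) (w : List Bool → EuclideanSpace ℝ (Fin dx))
    (b : List Bool → ℝ) (x : EuclideanSpace ℝ (Fin dx)),
    ∑ l : Fin D → Bool, routeProb dx D w b l x = 1 := by
  intro D
  induction D with
  | zero => intro w b x; simp [routeProb]
  | succ D ih =>
    intro w b x
    rw [sum_pi_bool_succ (fun l => routeProb dx (D+1) w b l x)]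
    simp only [routeProb_succ]
    rw [← Finset.mul_sum, ← Finset.mul_sum, ih, ih]
    simp

noncomputable def treeVal (dx dz D : ℕ) (w : List Bool → EuclideanSpace ℝ (Fin dx))
    (b : List Bool → ℝ) (leaf : (Fin D → Bool) → EuclideanSpace ℝ (Fin dz))
    (x : EuclideanSpace ℝ (Fin dx)) : EuclideanSpace ℝ (Fin dz) :=
  ∑ l : Fin D → Bool, routeProb dx D w b l x • leaf l

lemma sum_pi_bool_succ' {D : ℕ} {E : Type*} [AddCommMonoid E] (f : (Fin (D+1) → Bool) → E) :
    ∑ l : Fin (D+1) → Bool, f l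
      = (∑ t : Fin D → Bool, f (Fin.cons true t)) + ∑ t : Fin D → Bool, f (Fin.cons false t) := by
  rw [← (Fin.consEquiv (fun _ : Fin (D+1) => Bool)).sum_comp f]
  rw [Fintype.sum_prod_type]
  rw [Fintype.sum_bool]
  rfl

lemma treeVal_norm_le (dx dz D : ℕ) (w : List Bool → EuclideanSpace ℝ (Fin dx))
    (b : List Bool → ℝ) (leaf : (Fin D → Bool) → EuclideanSpace ℝ (Fin dz))
    (x : EuclideanSpace ℝ (Fin dx)) (Pimax : ℝ) (hPi : ∀ l, ‖leaf l‖ ≤ Pimax) :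
    ‖treeVal dx dz D w b leaf x‖ ≤ Pimax := by
  calc ‖treeVal dx dz D w b leaf x‖
      ≤ ∑ l : Fin D → Bool, ‖routeProb dx D w b l x • leaf l‖ := norm_sum_le _ _
    _ ≤ ∑ l : Fin D → Bool, routeProb dx D w b l x * Pimax := by
        apply Finset.sum_le_sum
        intro l _
        rw [norm_smul, Real.norm_eq_abs, abs_of_nonneg (routeProb_nonneg dx D w b l x)]
        exact mul_le_mul_of_nonneg_left (hPi l) (routeProb_nonneg dx D w b l x)
    _ = Pimax := by rw [← Finset.sum_mul, routeProb_sum_one, one_mul]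

lemma treeVal_succ (dx dz D : ℕ) (w : List Bool → EuclideanSpace ℝ (Fin dx))
    (b : List Bool → ℝ) (leaf : (Fin (D+1) → Bool) → EuclideanSpace ℝ (Fin dz))
    (x : EuclideanSpace ℝ (Fin dx)) :
    treeVal dx dz (D+1) w b leaf x =
      sigmoid ((inner ℝ (w []) x : ℝ) + b []) •
        treeVal dx dz D (fun pre => w (true :: pre)) (fun pre => b (true :: pre))
          (fun t => leaf (Fin.cons true t)) x
      + (1 - sigmoid ((inner ℝ (w []) x : ℝ) + b [])) •
        treeVal dx dz D (fun pre => w (false :: pre)) (fun pre => b (false :: pre))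
          (fun t => leaf (Fin.cons false t)) x := by
  unfold treeVal
  rw [sum_pi_bool_succ' (fun l => routeProb dx (D+1) w b l x • leaf l)]
  simp only [routeProb_succ]
  rw [Finset.smul_sum, Finset.smul_sum]
  congr 1
  · apply Finset.sum_congr rfl; intro t _; simp [mul_smul]
  · apply Finset.sum_congr rfl; intro t _; simp [mul_smul]

lemma one_add_exp_pos (z : ℝ) : 0 < 1 + Real.exp (-z) := by positivity

lemma sigmoid_hasDerivAt (z : ℝ) :
    HasDerivAt sigmoid (Real.exp (-z) / (1 + Real.exp (-z))^2) z := by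
  have h1 : HasDerivAt (fun z : ℝ => 1 + Real.exp (-z)) (-Real.exp (-z)) z := by
    have := (Real.hasDerivAt_exp (-z)).comp z (hasDerivAt_neg z)
    simpa using this.const_add 1
  have h2 := h1.inv (ne_of_gt (one_add_exp_pos z))
  have h3 : HasDerivAt (fun z : ℝ => (1 + Real.exp (-z))⁻¹)
      (Real.exp (-z) / (1 + Real.exp (-z))^2) z := by
    rw [neg_neg] at h2; exact h2
  have : sigmoid = fun z : ℝ => (1 + Real.exp (-z))⁻¹ := by
    funext y; simp [sigmoid, one_div]
  rw [this]; exact h3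

lemma sigmoid_lipschitz (a c : ℝ) : |sigmoid a - sigmoid c| ≤ (1/4) * |a - c| := by
  have hlip : LipschitzWith (1/4 : ℝ≥0) sigmoid := by
    apply lipschitzWith_of_nnnorm_deriv_le
    · exact fun z => (sigmoid_hasDerivAt z).differentiableAt
    · intro z
      have hd : deriv sigmoid z = Real.exp (-z) / (1 + Real.exp (-z))^2 :=
        (sigmoid_hasDerivAt z).deriv
      rw [← NNReal.coe_le_coe]
      have hcoe : (‖deriv sigmoid z‖₊ : ℝ) = |deriv sigmoid z| := rfl
      rw [hcoe, hd]
      have hu : (0:ℝ) < Real.exp (-z) := Real.exp_pos _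
      have h4 : 4 * Real.exp (-z) ≤ (1 + Real.exp (-z))^2 := by
        nlinarith [sq_nonneg (1 - Real.exp (-z))]
      rw [abs_of_nonneg (by positivity)]
      rw [div_le_iff₀ (by positivity)]
      push_cast
      nlinarith
  have := hlip.dist_le_mul a c
  have hc : ((1/4 : ℝ≥0) : ℝ) = 1/4 := by norm_num
  rw [hc] at this
  simpa [Real.dist_eq] using this

lemma treeVal_lip (dx dz : ℕ) (Wmax Pimax : ℝ) (hW0 : 0 ≤ Wmax) (hP0 : 0 ≤ Pimax) :
    ∀ (D : ℕ) (w : List Bool → EuclideanSpace ℝ (Fin dx)) (b : List Bool → ℝ)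
      (leaf : (Fin D → Bool) → EuclideanSpace ℝ (Fin dz)),
      (∀ pre : List Bool, pre.length < D → ‖w pre‖ ≤ Wmax) →
      (∀ l, ‖leaf l‖ ≤ Pimax) →
      ∀ x₁ x₂ : EuclideanSpace ℝ (Fin dx),
        ‖treeVal dx dz D w b leaf x₁ - treeVal dx dz D w b leaf x₂‖
          ≤ (D : ℝ) * Wmax * Pimax * ‖x₁ - x₂‖ := by
  intro D
  induction D with
  | zero =>
    intro w b leaf hw hl x₁ x₂
    simp [treeVal, routeProb]
  | succ D ih =>
    intro w b leaf hw hl x₁ x₂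
    rw [treeVal_succ, treeVal_succ]
    set a₁ : ℝ := (inner ℝ (w []) x₁ : ℝ) + b [] with ha₁
    set a₂ : ℝ := (inner ℝ (w []) x₂ : ℝ) + b [] with ha₂
    set s₁ : ℝ := sigmoid a₁ with hs₁def
    set s₂ : ℝ := sigmoid a₂ with hs₂def
    set wt := fun pre => w (true :: pre)
    set bt := fun pre => b (true :: pre)
    set lt := fun t : Fin D → Bool => leaf (Fin.cons true t)
    set wf := fun pre => w (false :: pre)
    set bf := fun pre => b (false :: pre)
    set lf := fun t : Fin D → Bool => leaf (Fin.cons false t)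
    set A₁ := treeVal dx dz D wt bt lt x₁
    set A₂ := treeVal dx dz D wt bt lt x₂
    set B₁ := treeVal dx dz D wf bf lf x₁
    set B₂ := treeVal dx dz D wf bf lf x₂
    have hwt : ∀ pre : List Bool, pre.length < D → ‖wt pre‖ ≤ Wmax := by
      intro pre hpre; exact hw (true :: pre) (by simpa using Nat.succ_lt_succ hpre)
    have hwf : ∀ pre : List Bool, pre.length < D → ‖wf pre‖ ≤ Wmax := by
      intro pre hpre; exact hw (false :: pre) (by simpa using Nat.succ_lt_succ hpre)
    have hlt : ∀ l, ‖lt l‖ ≤ Pimax := fun l => hl _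
    have hlf : ∀ l, ‖lf l‖ ≤ Pimax := fun l => hl _
    have key : s₁ • A₁ + (1 - s₁) • B₁ - (s₂ • A₂ + (1 - s₂) • B₂)
        = s₁ • (A₁ - A₂) + (1 - s₁) • (B₁ - B₂) + (s₁ - s₂) • (A₂ - B₂) := by
      module
    rw [key]
    have hs₁0 : 0 ≤ s₁ := (sigmoid_pos a₁).le
    have hs₁1 : s₁ ≤ 1 := (sigmoid_lt_one a₁).le
    have hA : ‖A₁ - A₂‖ ≤ (D : ℝ) * Wmax * Pimax * ‖x₁ - x₂‖ := ih wt bt lt hwt hlt x₁ x₂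
    have hB : ‖B₁ - B₂‖ ≤ (D : ℝ) * Wmax * Pimax * ‖x₁ - x₂‖ := ih wf bf lf hwf hlf x₁ x₂
    have hA₂ : ‖A₂‖ ≤ Pimax := treeVal_norm_le dx dz D wt bt lt x₂ Pimax hlt
    have hB₂ : ‖B₂‖ ≤ Pimax := treeVal_norm_le dx dz D wf bf lf x₂ Pimax hlf
    have hab : |a₁ - a₂| ≤ Wmax * ‖x₁ - x₂‖ := by
      have heq : a₁ - a₂ = (inner ℝ (w []) (x₁ - x₂) : ℝ) := by
        rw [inner_sub_right]; simp [ha₁, ha₂]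
      rw [heq]
      calc |(inner ℝ (w []) (x₁ - x₂) : ℝ)| ≤ ‖w []‖ * ‖x₁ - x₂‖ := abs_real_inner_le_norm _ _
        _ ≤ Wmax * ‖x₁ - x₂‖ :=
            mul_le_mul_of_nonneg_right (hw [] (by simp)) (norm_nonneg _)
    have hs : |s₁ - s₂| ≤ (1/4) * (Wmax * ‖x₁ - x₂‖) := by
      have := sigmoid_lipschitz a₁ a₂
      nlinarith
    have hAB : ‖A₂ - B₂‖ ≤ 2 * Pimax := by
      calc ‖A₂ - B₂‖ ≤ ‖A₂‖ + ‖B₂‖ := norm_sub_le _ _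
        _ ≤ 2 * Pimax := by linarith
    have hnn : (0:ℝ) ≤ Wmax * Pimax * ‖x₁ - x₂‖ := by positivity
    calc ‖s₁ • (A₁ - A₂) + (1 - s₁) • (B₁ - B₂) + (s₁ - s₂) • (A₂ - B₂)‖
        ≤ ‖s₁ • (A₁ - A₂)‖ + ‖(1 - s₁) • (B₁ - B₂)‖ + ‖(s₁ - s₂) • (A₂ - B₂)‖ :=
          norm_add₃_le
      _ = s₁ * ‖A₁ - A₂‖ + (1 - s₁) * ‖B₁ - B₂‖ + |s₁ - s₂| * ‖A₂ - B₂‖ := by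
          rw [norm_smul, norm_smul, norm_smul, Real.norm_eq_abs, Real.norm_eq_abs,
            Real.norm_eq_abs, abs_of_nonneg hs₁0, abs_of_nonneg (by linarith : (0:ℝ) ≤ 1 - s₁)]
      _ ≤ ((D:ℝ) + 1) * Wmax * Pimax * ‖x₁ - x₂‖ := by
          have t1 : s₁ * ‖A₁ - A₂‖ ≤ s₁ * ((D : ℝ) * Wmax * Pimax * ‖x₁ - x₂‖) :=
            mul_le_mul_of_nonneg_left hA hs₁0
          have t2 : (1 - s₁) * ‖B₁ - B₂‖ ≤ (1 - s₁) * ((D : ℝ) * Wmax * Pimax * ‖x₁ - x₂‖) :=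
            mul_le_mul_of_nonneg_left hB (by linarith)
          have t3 : |s₁ - s₂| * ‖A₂ - B₂‖ ≤ ((1/4) * (Wmax * ‖x₁ - x₂‖)) * (2 * Pimax) :=
            mul_le_mul hs hAB (norm_nonneg _) (by positivity)
          nlinarith [mul_nonneg (Nat.cast_nonneg D : (0:ℝ) ≤ (D:ℝ)) hnn]
    push_cast
    linarith [le_refl (((D:ℝ) + 1) * Wmax * Pimax * ‖x₁ - x₂‖)]

/-- The decision rule of a soft regression forest with `T` trees: tree `t` has depth
`Dt t`, internal-node weights `w t`, biases `b t`, and leaf decision vectors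
`leaf t l ∈ ℝ^{d_z}`; the output is `f(x) = (1/T) Σ_t Σ_l p_{l,t}(x) · π_{l,t}`. -/
noncomputable def srf (dx dz T : ℕ) (Dt : Fin T → ℕ)
    (w : Fin T → List Bool → EuclideanSpace ℝ (Fin dx))
    (b : Fin T → List Bool → ℝ)
    (leaf : (t : Fin T) → (Fin (Dt t) → Bool) → EuclideanSpace ℝ (Fin dz))
    (x : EuclideanSpace ℝ (Fin dx)) : EuclideanSpace ℝ (Fin dz) :=
  (T : ℝ)⁻¹ • ∑ t, ∑ l : Fin (Dt t) → Bool, routeProb dx (Dt t) (w t) (b t) l x • leaf t l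

/-- The SRF decision rule is Lipschitz continuous with constant
`W_max · Π_max · (D_max − 1)`, where `W_max` bounds the norms of all internal-node
weight vectors, `Π_max` bounds the norms of all leaf decision vectors, and every
root-to-leaf path in every tree contains at most `D_max − 1` internal nodes. -/
theorem srf_lipschitz (dx dz T : ℕ) (Dt : Fin T → ℕ)
    (w : Fin T → List Bool → EuclideanSpace ℝ (Fin dx))
    (b : Fin T → List Bool → ℝ)
    (leaf : (t : Fin T) → (Fin (Dt t) → Bool) → EuclideanSpace ℝ (Fin dz))
    (Wmax Pimax : ℝ) (hWmax0 : 0 ≤ Wmax) (hPimax0 : 0 ≤ Pimax)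
    (Dmax : ℕ) (hDmax : 1 ≤ Dmax)
    (hW : ∀ t (pre : List Bool), pre.length < Dt t → ‖w t pre‖ ≤ Wmax)
    (hPi : ∀ t l, ‖leaf t l‖ ≤ Pimax)
    (hdepth : ∀ t, Dt t ≤ Dmax - 1) :
    ∀ x₁ x₂ : EuclideanSpace ℝ (Fin dx),
      ‖srf dx dz T Dt w b leaf x₁ - srf dx dz T Dt w b leaf x₂‖ ≤
        Wmax * Pimax * ((Dmax : ℝ) - 1) * ‖x₁ - x₂‖ := by
  intro x₁ x₂
  have hsrf : ∀ x, srf dx dz T Dt w b leaf x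
      = (T:ℝ)⁻¹ • ∑ t, treeVal dx dz (Dt t) (w t) (b t) (leaf t) x := fun x => rfl
  rw [hsrf, hsrf, ← smul_sub, ← Finset.sum_sub_distrib]
  set C : ℝ := Wmax * Pimax * ((Dmax : ℝ) - 1) * ‖x₁ - x₂‖ with hC
  have hD1 : (0:ℝ) ≤ (Dmax:ℝ) - 1 := by
    have : (1:ℝ) ≤ (Dmax:ℝ) := by exact_mod_cast hDmax
    linarith
  have hC0 : 0 ≤ C := by
    rw [hC]
    have := norm_nonneg (x₁ - x₂)
    positivity
  have hbound : ∀ t : Fin T,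
      ‖treeVal dx dz (Dt t) (w t) (b t) (leaf t) x₁
        - treeVal dx dz (Dt t) (w t) (b t) (leaf t) x₂‖ ≤ C := by
    intro t
    have h1 := treeVal_lip dx dz Wmax Pimax hWmax0 hPimax0 (Dt t) (w t) (b t) (leaf t)
      (hW t) (hPi t) x₁ x₂
    have h2 : (Dt t : ℝ) ≤ (Dmax:ℝ) - 1 := by
      have h3 : (Dt t : ℝ) ≤ ((Dmax - 1 : ℕ) : ℝ) := by exact_mod_cast hdepth t
      rwa [Nat.cast_sub hDmax, Nat.cast_one] at h3
    refine le_trans h1 ?_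
    rw [hC]
    nlinarith [mul_le_mul_of_nonneg_right h2
      (mul_nonneg (mul_nonneg hWmax0 hPimax0) (norm_nonneg (x₁ - x₂)))]
  calc ‖(T:ℝ)⁻¹ • ∑ t, (treeVal dx dz (Dt t) (w t) (b t) (leaf t) x₁
          - treeVal dx dz (Dt t) (w t) (b t) (leaf t) x₂)‖
      = (T:ℝ)⁻¹ * ‖∑ t, (treeVal dx dz (Dt t) (w t) (b t) (leaf t) x₁
          - treeVal dx dz (Dt t) (w t) (b t) (leaf t) x₂)‖ := by
        rw [norm_smul, Real.norm_eq_abs, abs_of_nonneg (by positivity)]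
    _ ≤ (T:ℝ)⁻¹ * ((T:ℝ) * C) := by
        apply mul_le_mul_of_nonneg_left _ (by positivity)
        calc ‖∑ t, (treeVal dx dz (Dt t) (w t) (b t) (leaf t) x₁
              - treeVal dx dz (Dt t) (w t) (b t) (leaf t) x₂)‖
            ≤ ∑ t : Fin T, ‖treeVal dx dz (Dt t) (w t) (b t) (leaf t) x₁
              - treeVal dx dz (Dt t) (w t) (b t) (leaf t) x₂‖ := norm_sum_le _ _
          _ ≤ ∑ _t : Fin T, C := Finset.sum_le_sum fun t _ => hbound t
          _ = (T:ℝ) * C := by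
              rw [Finset.sum_const, Finset.card_univ, Fintype.card_fin, nsmul_eq_mul]
    _ ≤ C := by
        rcases Nat.eq_zero_or_pos T with h | h
        · subst h; simpa using hC0
        · rw [← mul_assoc, inv_mul_cancel₀ (by exact_mod_cast h.ne' : (T:ℝ) ≠ 0), one_mul]
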